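/- Let n ≥ 2, let F be the n×n matrix with F_{i,i+1} = 1 for i = 1,…,n−1 and all other entries 0, and let D be an n×n diagonal matrix with diagonal vector d := D𝟏, d_av := 𝟏^T d / n, and d_av2 := 𝟏^T D² 𝟏 / n. For a permutation matrix P write D_P := P^T D P. Then the average over all n! permutation matrices P satisfies (1/n!)·∑_{P} P (I − 𝟏 e₁^T) D_P (−2I + F + F^T) D_P (I − e₁ 𝟏^T) P^T = −2·(1 + 1/n)·D² + (2/n)·d d^T − (d_av/(n−1))·( 𝟏 d^T + d 𝟏^T ) + ((2n−1)/(n(n−1)))·( 𝟏𝟏^T D² + D² 𝟏𝟏^T ) − 2·d_av2·𝟏𝟏^T. -/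

import Mathlib

open Matrix

/-- The matrix with ones on the superdiagonal. -/
def matF (n : ℕ) : Matrix (Fin n) (Fin n) ℝ :=
  Matrix.of fun i j => if (i : ℕ) + 1 = (j : ℕ) then 1 else 0

/-- The permutation matrix `P` of `σ`, satisfying `P e_j = e_{σ j}`. -/
def permMat {n : ℕ} (σ : Equiv.Perm (Fin n)) : Matrix (Fin n) (Fin n) ℝ :=
  Matrix.of fun i j => if i = σ j then 1 else 0

namespace AvgAux

open Equiv Finset

lemma sum_perm_one {n : ℕ} (a : Fin (n+1)) (g : Fin (n+1) → ℝ) :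
    ∑ σ : Equiv.Perm (Fin (n+1)), g (σ a) = n.factorial * ∑ x, g x := by
  have h1 : ∑ σ : Equiv.Perm (Fin (n+1)), g (σ a)
      = ∑ σ : Equiv.Perm (Fin (n+1)), g (σ 0) := by
    rw [← Equiv.sum_comp (Equiv.mulRight (Equiv.swap 0 a)) (fun σ => g (σ 0))]
    simp [Equiv.Perm.mul_apply]
  rw [h1, ← Equiv.sum_comp (Equiv.Perm.decomposeFin (n := n)).symm (fun σ => g (σ 0))]
  simp only [Fintype.sum_prod_type, Equiv.Perm.decomposeFin_symm_apply_zero,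
    Finset.sum_const, Finset.card_univ, Fintype.card_perm, Fintype.card_fin, nsmul_eq_mul]
  rw [Finset.mul_sum]

lemma sum_succ_swap {n : ℕ} (p : Fin (n+2)) (h : Fin (n+2) → ℝ) :
    ∑ q : Fin (n+1), h (Equiv.swap 0 p q.succ) = ∑ y ∈ Finset.univ.erase p, h y := by
  refine Finset.sum_bij (fun q _ => Equiv.swap 0 p q.succ) ?_ ?_ ?_ ?_
  · intro q _
    simp only [Finset.mem_erase, Finset.mem_univ, and_true]
    intro hq
    have : (q.succ : Fin (n+2)) = 0 := by
      have := congrArg (Equiv.swap 0 p) hq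
      simpa using this
    exact Fin.succ_ne_zero q this
  · intro q1 _ q2 _ hq
    have := (Equiv.swap 0 p).injective hq
    exact Fin.succ_injective _ this
  · intro y hy
    simp only [Finset.mem_erase, Finset.mem_univ, and_true] at hy
    have h0 : Equiv.swap 0 p y ≠ 0 := by
      intro hc
      apply hy
      have := congrArg (Equiv.swap 0 p) hc
      simp at this
      exact this
    obtain ⟨q, hq⟩ := Fin.exists_succ_eq.mpr h0
    refine ⟨q, Finset.mem_univ q, ?_⟩
    show Equiv.swap 0 p q.succ = y
    rw [hq]; simp
  · intros; rfl

lemma sum_perm_two {n : ℕ} (a b : Fin (n+2)) (hab : a ≠ b) (g : Fin (n+2) → Fin (n+2) → ℝ) :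
    ∑ σ : Equiv.Perm (Fin (n+2)), g (σ a) (σ b)
      = n.factorial * ∑ x, ∑ y ∈ Finset.univ.erase x, g x y := by
  set π : Equiv.Perm (Fin (n+2)) :=
    (Equiv.swap 0 a) * (Equiv.swap 1 ((Equiv.swap 0 a) b)) with hπ
  have hc : (Equiv.swap 0 a) b ≠ 0 := by
    intro h
    have := congrArg (Equiv.swap 0 a) h
    simp at this
    exact hab this.symm
  have hπ0 : π 0 = a := by
    rw [hπ]
    simp only [Equiv.Perm.mul_apply]
    rw [Equiv.swap_apply_of_ne_of_ne zero_ne_one (Ne.symm hc), Equiv.swap_apply_left]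
  have hπ1 : π 1 = b := by
    rw [hπ]
    simp only [Equiv.Perm.mul_apply]
    rw [Equiv.swap_apply_left]
    simp
  have h1 : ∑ σ : Equiv.Perm (Fin (n+2)), g (σ a) (σ b)
      = ∑ σ : Equiv.Perm (Fin (n+2)), g (σ 0) (σ 1) := by
    rw [← Equiv.sum_comp (Equiv.mulRight π) (fun σ => g (σ 0) (σ 1))]
    simp [Equiv.Perm.mul_apply, hπ0, hπ1]
  rw [h1, ← Equiv.sum_comp (Equiv.Perm.decomposeFin (n := n+1)).symm
      (fun σ => g (σ 0) (σ 1))]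
  rw [Fintype.sum_prod_type]
  have key : ∀ p : Fin (n+2), (∑ τ : Equiv.Perm (Fin (n+1)),
      g ((Equiv.Perm.decomposeFin.symm (p, τ)) 0) ((Equiv.Perm.decomposeFin.symm (p, τ)) 1))
      = n.factorial * ∑ y ∈ Finset.univ.erase p, g p y := by
    intro p
    have hs : ∀ τ : Equiv.Perm (Fin (n+1)),
        ((Equiv.Perm.decomposeFin.symm (p, τ)) : Equiv.Perm (Fin (n+2))) 1
          = Equiv.swap 0 p (τ 0).succ := by
      intro τ
      have := Equiv.Perm.decomposeFin_symm_apply_succ τ p 0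
      simpa using this
    simp only [Equiv.Perm.decomposeFin_symm_apply_zero, hs]
    rw [sum_perm_one 0 (fun q => g p (Equiv.swap 0 p q.succ))]
    rw [sum_succ_swap p (fun y => g p y)]
  simp only [key]
  rw [Finset.mul_sum]

def Bv {n : ℕ} (k l : Fin n) : ℝ :=
  (if k = l then -2 else 0) + (if (k:ℕ)+1 = (l:ℕ) then 1 else 0)
    + (if (l:ℕ)+1 = (k:ℕ) then 1 else 0)

lemma Bv_symm {n : ℕ} (k l : Fin n) : Bv k l = Bv l k := by
  unfold Bv
  by_cases h : k = l
  · rw [if_pos h, if_pos h.symm]; ring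
  · rw [if_neg h, if_neg (Ne.symm h)]; ring

lemma Bv_diag {n : ℕ} (k : Fin n) : Bv k k = -2 := by
  simp [Bv]

lemma Bmat_apply {n : ℕ} (k l : Fin n) :
    ((-2:ℝ) • (1 : Matrix (Fin n) (Fin n) ℝ) + matF n + (matF n)ᵀ) k l = Bv k l := by
  simp only [Bv, matF, Matrix.add_apply, Matrix.smul_apply, Matrix.transpose_apply,
    Matrix.one_apply, Matrix.of_apply, smul_eq_mul, mul_ite, mul_one, mul_zero]

lemma permMat_mul_apply {n : ℕ} (σ : Equiv.Perm (Fin n)) (X : Matrix (Fin n) (Fin n) ℝ)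
    (i j : Fin n) : (permMat σ * X) i j = X (σ⁻¹ i) j := by
  simp only [Matrix.mul_apply, permMat, Matrix.of_apply, ite_mul, one_mul, zero_mul]
  rw [Finset.sum_eq_single (σ⁻¹ i)]
  · simp
  · intro k _ hk
    rw [if_neg]
    intro h; exact hk (by rw [h]; simp)
  · simp

lemma mul_permMatT_apply {n : ℕ} (σ : Equiv.Perm (Fin n)) (X : Matrix (Fin n) (Fin n) ℝ)
    (i j : Fin n) : (X * (permMat σ)ᵀ) i j = X i (σ⁻¹ j) := by
  simp only [Matrix.mul_apply, permMat, Matrix.transpose_apply, Matrix.of_apply,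
    mul_ite, mul_one, mul_zero]
  rw [Finset.sum_eq_single (σ⁻¹ j)]
  · simp
  · intro k _ hk
    rw [if_neg]
    intro h; exact hk (by rw [h]; simp)
  · simp

lemma mul_permMat_apply {n : ℕ} (σ : Equiv.Perm (Fin n)) (X : Matrix (Fin n) (Fin n) ℝ)
    (i j : Fin n) : (X * permMat σ) i j = X i (σ j) := by
  simp only [Matrix.mul_apply, permMat, Matrix.of_apply, mul_ite, mul_one, mul_zero]
  rw [Finset.sum_ite_eq' Finset.univ (σ j) (fun k => X i k)]
  simp

lemma permMatT_mul_apply {n : ℕ} (σ : Equiv.Perm (Fin n)) (X : Matrix (Fin n) (Fin n) ℝ)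
    (i j : Fin n) : ((permMat σ)ᵀ * X) i j = X (σ i) j := by
  simp only [Matrix.mul_apply, permMat, Matrix.transpose_apply, Matrix.of_apply,
    ite_mul, one_mul, zero_mul]
  rw [Finset.sum_ite_eq' Finset.univ (σ i) (fun k => X k j)]
  simp

lemma conj_diag {n : ℕ} (σ : Equiv.Perm (Fin n)) (d : Fin n → ℝ) :
    (permMat σ)ᵀ * Matrix.diagonal d * permMat σ = Matrix.diagonal (fun k => d (σ k)) := by
  ext k l
  rw [mul_permMat_apply, permMatT_mul_apply]
  by_cases h : k = l
  · subst h; simp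
  · rw [Matrix.diagonal_apply_ne _ (fun hc => h (σ.injective hc)),
      Matrix.diagonal_apply_ne _ h]

lemma full_entry {n : ℕ} (σ : Equiv.Perm (Fin n)) (e : Fin n → ℝ) (z0 : Fin n)
    (i j : Fin n) :
    (permMat σ * ((1 : Matrix (Fin n) (Fin n) ℝ)
        - Matrix.vecMulVec (fun _ => 1) (Pi.single z0 1)) *
      Matrix.diagonal e *
      ((-2:ℝ) • (1 : Matrix (Fin n) (Fin n) ℝ) + matF n + (matF n)ᵀ) *
      Matrix.diagonal e *
      ((1 : Matrix (Fin n) (Fin n) ℝ) - Matrix.vecMulVec (Pi.single z0 1) (fun _ => 1)) *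
      (permMat σ)ᵀ : Matrix (Fin n) (Fin n) ℝ) i j
    = (e (σ⁻¹ i) * Bv (σ⁻¹ i) (σ⁻¹ j) - e z0 * Bv z0 (σ⁻¹ j)) * e (σ⁻¹ j)
      - (e (σ⁻¹ i) * Bv (σ⁻¹ i) z0 - e z0 * Bv z0 z0) * e z0 := by
  set Bm : Matrix (Fin n) (Fin n) ℝ :=
    (-2:ℝ) • (1 : Matrix (Fin n) (Fin n) ℝ) + matF n + (matF n)ᵀ with hBm
  set U : Matrix (Fin n) (Fin n) ℝ :=
    (1 : Matrix (Fin n) (Fin n) ℝ) - Matrix.vecMulVec (fun _ => 1) (Pi.single z0 1) with hU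
  set V : Matrix (Fin n) (Fin n) ℝ :=
    (1 : Matrix (Fin n) (Fin n) ℝ) - Matrix.vecMulVec (Pi.single z0 1) (fun _ => 1) with hV
  have two_apply : ∀ l : Fin n, (permMat σ * U) i l
      = (if σ⁻¹ i = l then 1 else 0) - (if l = z0 then 1 else 0) := by
    intro l
    rw [permMat_mul_apply, hU]
    simp [Matrix.one_apply, Matrix.vecMulVec_apply, Pi.single_apply]
  have four_apply : ∀ k : Fin n, (permMat σ * U * Matrix.diagonal e * Bm) i k
      = e (σ⁻¹ i) * Bv (σ⁻¹ i) k - e z0 * Bv z0 k := by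
    intro k
    rw [Matrix.mul_apply]
    have h3 : ∀ l, (permMat σ * U * Matrix.diagonal e) i l
        = ((if σ⁻¹ i = l then 1 else 0) - (if l = z0 then 1 else 0)) * e l := by
      intro l
      rw [Matrix.mul_diagonal, two_apply]
    have hB : ∀ l, Bm l k = Bv l k := fun l => Bmat_apply l k
    simp_rw [h3, hB, sub_mul, ite_mul, one_mul, zero_mul,
      Finset.sum_sub_distrib, Finset.sum_ite_eq, Finset.sum_ite_eq', Finset.mem_univ,
      if_true]
  have five_apply : ∀ k : Fin n,
      (permMat σ * U * Matrix.diagonal e * Bm * Matrix.diagonal e) i k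
      = (e (σ⁻¹ i) * Bv (σ⁻¹ i) k - e z0 * Bv z0 k) * e k := by
    intro k
    rw [Matrix.mul_diagonal, four_apply]
  have six_apply : ∀ l : Fin n,
      (permMat σ * U * Matrix.diagonal e * Bm * Matrix.diagonal e * V) i l
      = (e (σ⁻¹ i) * Bv (σ⁻¹ i) l - e z0 * Bv z0 l) * e l
        - (e (σ⁻¹ i) * Bv (σ⁻¹ i) z0 - e z0 * Bv z0 z0) * e z0 := by
    intro l
    rw [hV, Matrix.mul_sub, Matrix.mul_one, Matrix.sub_apply, five_apply]
    congr 1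
    rw [Matrix.mul_apply]
    simp_rw [five_apply, Matrix.vecMulVec_apply, Pi.single_apply, mul_one, mul_ite, mul_zero,
      Finset.sum_ite_eq', Finset.mem_univ, if_true, mul_one]
  rw [mul_permMatT_apply, six_apply]

lemma count_consec (N : ℕ) : (∑ x : Fin (N+2), ∑ y ∈ Finset.univ.erase x,
    (if (x:ℕ)+1 = (y:ℕ) then (1:ℝ) else 0)) = (N+1 : ℝ) := by
  have hx : ∀ x : Fin (N+2), (∑ y ∈ Finset.univ.erase x,
      (if (x:ℕ)+1 = (y:ℕ) then (1:ℝ) else 0))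
      = ∑ y : Fin (N+2), (if (x:ℕ)+1 = (y:ℕ) then (1:ℝ) else 0) := by
    intro x
    apply Finset.sum_erase
    simp
  have hy : ∀ x : Fin (N+2), (∑ y : Fin (N+2), (if (x:ℕ)+1 = (y:ℕ) then (1:ℝ) else 0))
      = if (x:ℕ)+1 < N+2 then 1 else 0 := by
    intro x
    rw [Fin.sum_univ_eq_sum_range (fun k => if (x:ℕ)+1 = k then (1:ℝ) else 0) (N+2)]
    rw [Finset.sum_ite_eq (Finset.range (N+2)) ((x:ℕ)+1) (fun _ => (1:ℝ))]
    simp [Finset.mem_range]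
  simp_rw [hx, hy]
  rw [Fin.sum_univ_eq_sum_range (fun k => if k+1 < N+2 then (1:ℝ) else 0) (N+2)]
  rw [Finset.sum_range_succ]
  have : ∀ k ∈ Finset.range (N+1), (if k+1 < N+2 then (1:ℝ) else 0) = 1 := by
    intro k hk
    rw [if_pos]
    simp only [Finset.mem_range] at hk
    omega
  rw [Finset.sum_congr rfl this, Finset.sum_const, if_neg (by omega)]
  simp

lemma erase_pick (N : ℕ) (j x : Fin (N+2)) (d : Fin (N+2) → ℝ) :
    (∑ y ∈ Finset.univ.erase x, d x * (if j = y then (1:ℝ) else 0))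
      = d x - (if j = x then d x else 0) := by
  simp_rw [mul_ite, mul_one, mul_zero]
  rw [Finset.sum_ite_eq (Finset.univ.erase x) j (fun _ => d x)]
  by_cases h : j = x
  · subst h; simp
  · simp [Finset.mem_erase, h]

end AvgAux

set_option maxHeartbeats 1000000 in
open AvgAux Equiv Finset in
theorem average_epsD_quadratic_term (n : ℕ) (hn : 2 ≤ n) (d : Fin n → ℝ)
    (dav dav2 : ℝ) (hdav : dav = (∑ i, d i) / n) (hdav2 : dav2 = (∑ i, (d i) ^ 2) / n) :
    ((n.factorial : ℝ))⁻¹ •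
        ∑ σ : Equiv.Perm (Fin n),
          permMat σ *
            ((1 : Matrix (Fin n) (Fin n) ℝ)
              - Matrix.vecMulVec (fun _ => 1) (Pi.single (⟨0, by omega⟩ : Fin n) 1)) *
            ((permMat σ)ᵀ * Matrix.diagonal d * permMat σ) *
            ((-2 : ℝ) • (1 : Matrix (Fin n) (Fin n) ℝ) + matF n + (matF n)ᵀ) *
            ((permMat σ)ᵀ * Matrix.diagonal d * permMat σ) *
            ((1 : Matrix (Fin n) (Fin n) ℝ)
              - Matrix.vecMulVec (Pi.single (⟨0, by omega⟩ : Fin n) 1) (fun _ => 1)) *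
            (permMat σ)ᵀ
      = (-2 * (1 + 1 / (n : ℝ))) • (Matrix.diagonal d ^ 2)
        + (2 / (n : ℝ)) • Matrix.vecMulVec d d
        - (dav / ((n : ℝ) - 1)) •
            (Matrix.vecMulVec (fun _ => 1) d + Matrix.vecMulVec d (fun _ => 1))
        + ((2 * (n : ℝ) - 1) / ((n : ℝ) * ((n : ℝ) - 1))) •
            (Matrix.vecMulVec (fun _ => 1) (fun _ => 1) * (Matrix.diagonal d ^ 2)
              + (Matrix.diagonal d ^ 2) * Matrix.vecMulVec (fun _ => 1) (fun _ => 1))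
        - (2 * dav2) • Matrix.vecMulVec (fun _ => 1) (fun _ => 1) := by
  subst hdav hdav2
  obtain ⟨N, rfl⟩ : ∃ m : ℕ, n = m + 2 := ⟨n - 2, by omega⟩
  have hz : (⟨0, by omega⟩ : Fin (N+2)) = 0 := rfl
  simp only [hz]
  set S : ℝ := ∑ i, d i with hS
  set Q : ℝ := ∑ i, (d i)^2 with hQ
  have h01 : (0 : Fin (N+2)) ≠ 1 := by simp [Fin.ext_iff]
  -- Bv rewriting lemmas
  have hBv0 : ∀ (σ : Equiv.Perm (Fin (N+2))) (x : Fin (N+2)),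
      Bv (0 : Fin (N+2)) (σ⁻¹ x)
        = (if x = σ 0 then -2 else 0) + (if x = σ 1 then 1 else 0) := by
    intro σ x
    unfold Bv
    have h3 : ¬ (((σ⁻¹ x : Fin (N+2)) : ℕ) + 1 = (((0:Fin (N+2)) : Fin (N+2)) : ℕ)) := by simp
    rw [if_neg h3, add_zero]
    congr 1
    · congr 1
      rw [eq_iff_iff]
      constructor
      · intro h; rw [h]; simp
      · intro h; rw [h]; simp
    · congr 1
      rw [eq_iff_iff, Fin.val_zero, zero_add]
      constructor
      · intro h
        have : σ⁻¹ x = (1 : Fin (N+2)) := by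
          rw [Fin.ext_iff, Fin.val_one, ← h]
        rw [show x = σ (σ⁻¹ x) by simp, this]
      · intro h
        rw [h]
        simp [Fin.val_one]
  -- elementary sums
  have hE1 : ∀ i j : Fin (N+2), (∑ σ : Equiv.Perm (Fin (N+2)), Bv (σ⁻¹ i) (σ⁻¹ j))
      = if i = j then (-2) * ((N+2).factorial : ℝ) else 2 * ((N+1).factorial : ℝ) := by
    intro i j
    by_cases h : i = j
    · subst h
      rw [if_pos rfl]
      simp only [Bv_diag, Finset.sum_const, Finset.card_univ, Fintype.card_perm,
        Fintype.card_fin, nsmul_eq_mul]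
      ring
    · rw [if_neg h]
      have hBne : ∀ σ : Equiv.Perm (Fin (N+2)), Bv (σ⁻¹ i) (σ⁻¹ j)
          = (if ((σ⁻¹ i : Fin (N+2)):ℕ)+1 = ((σ⁻¹ j : Fin (N+2)):ℕ) then (1:ℝ) else 0)
            + (if ((σ⁻¹ j : Fin (N+2)):ℕ)+1 = ((σ⁻¹ i : Fin (N+2)):ℕ) then (1:ℝ) else 0) := by
        intro σ
        unfold Bv
        rw [if_neg, zero_add]
        intro hc
        exact h (by simpa using congrArg σ hc)
      simp_rw [hBne, Finset.sum_add_distrib]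
      have hinv : ∀ (f : Equiv.Perm (Fin (N+2)) → ℝ), (∑ σ, f σ⁻¹) = ∑ σ, f σ := by
        intro f
        exact Equiv.sum_comp (Equiv.inv (Equiv.Perm (Fin (N+2)))) f
      rw [hinv (fun σ => if ((σ i : Fin (N+2)):ℕ)+1 = ((σ j : Fin (N+2)):ℕ) then (1:ℝ) else 0),
        hinv (fun σ => if ((σ j : Fin (N+2)):ℕ)+1 = ((σ i : Fin (N+2)):ℕ) then (1:ℝ) else 0)]
      rw [sum_perm_two i j h (fun x y => if (x:ℕ)+1 = (y:ℕ) then (1:ℝ) else 0)]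
      rw [sum_perm_two j i (Ne.symm h) (fun x y => if (x:ℕ)+1 = (y:ℕ) then (1:ℝ) else 0)]
      rw [count_consec N, Nat.factorial_succ]
      push_cast
      ring
  have hE2 : ∀ j : Fin (N+2),
      (∑ σ : Equiv.Perm (Fin (N+2)), d (σ 0) * Bv 0 (σ⁻¹ j))
      = (-2) * ((N+1).factorial : ℝ) * d j + (N.factorial : ℝ) * (S - d j) := by
    intro j
    simp_rw [hBv0, mul_add, Finset.sum_add_distrib]
    congr 1
    · rw [sum_perm_one 0 (fun x => d x * (if j = x then -2 else 0))]
      simp_rw [mul_ite, mul_zero]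
      rw [Finset.sum_ite_eq Finset.univ j (fun x => d x * (-2))]
      simp only [Finset.mem_univ, if_true]
      ring
    · rw [sum_perm_two 0 1 h01 (fun x y => d x * (if j = y then 1 else 0))]
      have : ∀ x : Fin (N+2), (∑ y ∈ Finset.univ.erase x, d x * (if j = y then (1:ℝ) else 0))
          = d x - (if j = x then d x else 0) := fun x => erase_pick N j x d
      simp_rw [this, Finset.sum_sub_distrib]
      rw [Finset.sum_ite_eq Finset.univ j (fun x => d x)]
      simp only [Finset.mem_univ, if_true, ← hS]
  have hE4 : (∑ σ : Equiv.Perm (Fin (N+2)), d (σ 0) * d (σ 0))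
      = ((N+1).factorial : ℝ) * Q := by
    rw [sum_perm_one 0 (fun x => d x * d x)]
    rw [hQ]
    congr 1
    exact Finset.sum_congr rfl fun x _ => (sq (d x)) ▸ by ring
  -- entrywise
  ext i j
  rw [Matrix.smul_apply, Matrix.sum_apply, smul_eq_mul]
  have hsummand : ∀ σ : Equiv.Perm (Fin (N+2)),
      (permMat σ * ((1 : Matrix (Fin (N+2)) (Fin (N+2)) ℝ)
          - Matrix.vecMulVec (fun _ => 1) (Pi.single (0 : Fin (N+2)) 1)) *
        ((permMat σ)ᵀ * Matrix.diagonal d * permMat σ) *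
        ((-2 : ℝ) • (1 : Matrix (Fin (N+2)) (Fin (N+2)) ℝ) + matF (N+2) + (matF (N+2))ᵀ) *
        ((permMat σ)ᵀ * Matrix.diagonal d * permMat σ) *
        ((1 : Matrix (Fin (N+2)) (Fin (N+2)) ℝ)
          - Matrix.vecMulVec (Pi.single (0 : Fin (N+2)) 1) (fun _ => 1)) *
        (permMat σ)ᵀ : Matrix (Fin (N+2)) (Fin (N+2)) ℝ) i j
      = d i * d j * Bv (σ⁻¹ i) (σ⁻¹ j) - d j * (d (σ 0) * Bv 0 (σ⁻¹ j))
        - d i * (d (σ 0) * Bv 0 (σ⁻¹ i)) - 2 * (d (σ 0) * d (σ 0)) := by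
    intro σ
    rw [conj_diag, full_entry σ (fun k => d (σ k)) 0 i j]
    simp only [show ∀ x, σ (σ⁻¹ x) = x from fun x => by simp]
    rw [Bv_symm (σ⁻¹ i) 0, Bv_diag]
    ring
  rw [Finset.sum_congr rfl (fun σ _ => hsummand σ)]
  have split : (∑ σ : Equiv.Perm (Fin (N+2)),
      (d i * d j * Bv (σ⁻¹ i) (σ⁻¹ j) - d j * (d (σ 0) * Bv 0 (σ⁻¹ j))
        - d i * (d (σ 0) * Bv 0 (σ⁻¹ i)) - 2 * (d (σ 0) * d (σ 0))))
      = d i * d j * (∑ σ : Equiv.Perm (Fin (N+2)), Bv (σ⁻¹ i) (σ⁻¹ j))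
        - d j * (∑ σ : Equiv.Perm (Fin (N+2)), d (σ 0) * Bv 0 (σ⁻¹ j))
        - d i * (∑ σ : Equiv.Perm (Fin (N+2)), d (σ 0) * Bv 0 (σ⁻¹ i))
        - 2 * (∑ σ : Equiv.Perm (Fin (N+2)), d (σ 0) * d (σ 0)) := by
    rw [Finset.sum_sub_distrib, Finset.sum_sub_distrib, Finset.sum_sub_distrib,
      Finset.mul_sum, Finset.mul_sum, Finset.mul_sum, Finset.mul_sum]
  rw [split, hE1 i j, hE2 j, hE2 i, hE4]
  -- right-hand side entry
  have hd2 : (Matrix.diagonal d ^ 2 : Matrix (Fin (N+2)) (Fin (N+2)) ℝ)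
      = Matrix.diagonal (fun k => d k * d k) := by
    rw [sq, Matrix.diagonal_mul_diagonal]
  simp only [Matrix.add_apply, Matrix.sub_apply, Matrix.smul_apply, smul_eq_mul, hd2,
    Matrix.vecMulVec_apply, Matrix.diagonal_apply, Matrix.mul_diagonal, Matrix.diagonal_mul,
    one_mul, mul_one]
  have hfne : (N.factorial : ℝ) ≠ 0 := Nat.cast_ne_zero.mpr (Nat.factorial_ne_zero N)
  have hf1 : ((N+1).factorial : ℝ) = ((N:ℝ)+1) * (N.factorial : ℝ) := by
    rw [Nat.factorial_succ]; push_cast; ring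
  have hf2 : ((N+2).factorial : ℝ) = ((N:ℝ)+2) * (((N:ℝ)+1) * (N.factorial : ℝ)) := by
    rw [Nat.factorial_succ, Nat.factorial_succ]; push_cast; ring
  rw [hf1, hf2]
  have hn0 : ((N:ℝ)+2) ≠ 0 := by positivity
  have hn1 : ((N:ℝ)+1) ≠ 0 := by positivity
  have hcast : ((N+2 : ℕ) : ℝ) = (N:ℝ) + 2 := by push_cast; ring
  by_cases hij : i = j
  · subst hij
    simp only [if_pos rfl, hcast]
    have hsub : ((N:ℝ)+2) - 1 = (N:ℝ)+1 := by ring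
    rw [hsub]
    field_simp
    simp only [if_true]
    ring
  · simp only [if_neg hij, hcast]
    have hsub : ((N:ℝ)+2) - 1 = (N:ℝ)+1 := by ring
    rw [hsub]
    field_simp
    ring
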